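/- If A = A1 ∪ A2 is a disjoint partition of a set A of variable nodes such that every check node in the subgraph induced by A has even degree, and A1 is an (a1, b1)-absorbing set while A2 is an (a2, b2)-absorbing set, then b1 = b2. -/

import Mathlib

/-- Degree of check node `c` in the subgraph induced by the variable-node set `S`. -/
def chkDeg {V W : Type*} [Fintype V] [DecidableEq V]
    (Adj : V → W → Prop) [∀ v w, Decidable (Adj v w)] (S : Finset V) (c : W) : ℕ :=
  (S.filter (fun v => Adj v c)).card

/-- The odd-degree check nodes of the subgraph induced by `S`. -/
def oddChecks {V W : Type*} [Fintype V] [Fintype W] [DecidableEq V] [DecidableEq W]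
    (Adj : V → W → Prop) [∀ v w, Decidable (Adj v w)] (S : Finset V) : Finset W :=
  Finset.univ.filter (fun c => Odd (chkDeg Adj S c))

/-- `S` is an `(a,b)`-absorbing set: `|S| = a`, the induced subgraph has exactly `b`
odd-degree check nodes, and every `v ∈ S` has strictly more even-degree than odd-degree
check-node neighbors in the induced subgraph. -/
def IsAbsorbing {V W : Type*} [Fintype V] [Fintype W] [DecidableEq V] [DecidableEq W]
    (Adj : V → W → Prop) [∀ v w, Decidable (Adj v w)] (S : Finset V) (a b : ℕ) : Prop :=
  S.card = a ∧ (oddChecks Adj S).card = b ∧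
  ∀ v ∈ S,
    (Finset.univ.filter (fun c : W => Adj v c ∧ Even (chkDeg Adj S c))).card >
    (Finset.univ.filter (fun c : W => Adj v c ∧ Odd (chkDeg Adj S c))).card

/-- If `A = A1 ∪ A2` is a disjoint partition with every check node of `G_A` of even degree,
`A1` an `(a1,b1)`-absorbing set and `A2` an `(a2,b2)`-absorbing set, then `b1 = b2`. -/
theorem stmt_1 {V W : Type*} [Fintype V] [Fintype W] [DecidableEq V] [DecidableEq W]
    (Adj : V → W → Prop) [∀ v w, Decidable (Adj v w)]
    (A A1 A2 : Finset V) (a1 b1 a2 b2 : ℕ)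
    (hunion : A = A1 ∪ A2) (hdisj : Disjoint A1 A2)
    (heven : ∀ c : W, Even (chkDeg Adj A c))
    (h1 : IsAbsorbing Adj A1 a1 b1) (h2 : IsAbsorbing Adj A2 a2 b2) :
    b1 = b2 := by
  have key : ∀ c : W, chkDeg Adj A c = chkDeg Adj A1 c + chkDeg Adj A2 c := by
    intro c
    simp only [chkDeg, hunion, Finset.filter_union]
    exact Finset.card_union_of_disjoint
      (Finset.disjoint_filter_filter hdisj)
  have hodd : oddChecks Adj A1 = oddChecks Adj A2 := by
    ext c
    have h := heven c
    rw [key c] at h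
    simp only [oddChecks, Finset.mem_filter, Finset.mem_univ, true_and]
    rw [Nat.even_add] at h
    constructor
    · intro hc
      rw [← Nat.not_even_iff_odd] at hc ⊢
      tauto
    · intro hc
      rw [← Nat.not_even_iff_odd] at hc ⊢
      tauto
  rw [← h1.2.1, ← h2.2.1, hodd]
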